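/- Let f(x) = x² - x - 3 and σ(x) = 1/(x(2x - 1)). For every real x > -13/4 with x ≠ -3, if y₁ and y₂ are the two real solutions of f(y) = x and neither equals 0 nor 1/2, then σ(y₁) + σ(y₂) = 1/(x + 3). -/

import Mathlib

/-- For `f y = y^2 - y - 3` and `σ y = 1 / (y(2y - 1))`: if `x > -13/4`, `x ≠ -3`,
and `y₁, y₂` are the two real solutions of `f y = x`, none of which equals `0` or `1/2`,
then `σ y₁ + σ y₂ = 1 / (x + 3)`. -/
theorem sigma_sum (x y₁ y₂ : ℝ)
    (hx : -13/4 < x) (hx3 : x ≠ -3)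
    (h1 : y₁ ^ 2 - y₁ - 3 = x) (h2 : y₂ ^ 2 - y₂ - 3 = x) (hne : y₁ ≠ y₂)
    (hy10 : y₁ ≠ 0) (hy1h : y₁ ≠ 1/2) (hy20 : y₂ ≠ 0) (hy2h : y₂ ≠ 1/2) :
    1 / (y₁ * (2 * y₁ - 1)) + 1 / (y₂ * (2 * y₂ - 1)) = 1 / (x + 3) := by
  have hs : y₁ + y₂ = 1 := by
    have h : (y₁ - y₂) * (y₁ + y₂ - 1) = 0 := by nlinarith [h1, h2]
    rcases mul_eq_zero.1 h with h | h
    · exact absurd (by linarith) hne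
    · linarith
  have hp : y₁ * y₂ = -(x + 3) := by nlinarith [h1, hs]
  have hx3' : x + 3 ≠ 0 := fun h => hx3 (by linarith)
  have h1' : 2 * y₁ - 1 ≠ 0 := fun h => hy1h (by linarith)
  have h2' : 2 * y₂ - 1 ≠ 0 := fun h => hy2h (by linarith)
  rw [div_add_div _ _ (mul_ne_zero hy10 h1') (mul_ne_zero hy20 h2'), div_eq_div_iff (mul_ne_zero (mul_ne_zero hy10 h1') (mul_ne_zero hy20 h2')) hx3']
  nlinarith [hs, hp, sq_nonneg (y₁ - y₂)]
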